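/- Let A and B be nonempty closed convex subsets of a real Hilbert space such that B is a closed affine subspace and P_A(B) ⊆ B. Then P_A P_B = P_{A∩B}; in particular A ∩ B ≠ ∅. -/

import Mathlib

open scoped RealInnerProductSpace


/-- Constraint-reduction identity: if `A` is nonempty closed convex, `B` is a closed
affine subspace, and `P_A(B) ⊆ B`, then `A ∩ B ≠ ∅` and `P_A ∘ P_B = P_{A∩B}`. -/
theorem projection_composition_constraint_reduction
    {H : Type*} [NormedAddCommGroup H] [InnerProductSpace ℝ H] [CompleteSpace H]
    (A B : Set H)
    (hAne : A.Nonempty) (hAcl : IsClosed A) (hAconv : Convex ℝ A)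
    (hBcl : IsClosed B) (hBne : B.Nonempty)
    (hBaff : ∃ S : AffineSubspace ℝ H, (S : Set H) = B)
    (PA PB : H → H)
    (hPA : ∀ x : H, PA x ∈ A ∧ ∀ y ∈ A, ‖x - PA x‖ ≤ ‖x - y‖)
    (hPB : ∀ x : H, PB x ∈ B ∧ ∀ y ∈ B, ‖x - PB x‖ ≤ ‖x - y‖)
    (hmaps : ∀ b ∈ B, PA b ∈ B) :
    (A ∩ B).Nonempty ∧
      ∀ x : H, PA (PB x) ∈ A ∩ B ∧ ∀ z ∈ A ∩ B, ‖x - PA (PB x)‖ ≤ ‖x - z‖ := by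
  obtain ⟨S, hS⟩ := hBaff
  have hconv : Convex ℝ B := hS ▸ S.convex
  haveI : Nonempty B := hBne.to_subtype
  -- orthogonality of `x - PB x` to directions in `B`
  have key : ∀ x : H, ∀ b ∈ B, ⟪x - PB x, b - PB x⟫ = 0 := by
    intro x b hb
    have hp : PB x ∈ B := (hPB x).1
    have hinf : ‖x - PB x‖ = ⨅ w : B, ‖x - w‖ := by
      refine le_antisymm (le_ciInf fun w => (hPB x).2 w w.2) ?_
      refine ciInf_le ⟨0, ?_⟩ (⟨PB x, hp⟩ : B)
      rintro _ ⟨w, rfl⟩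
      exact norm_nonneg _
    have hle := (norm_eq_iInf_iff_real_inner_le_zero hconv hp).mp hinf
    -- reflection of b through PB x stays in B
    have hr : (2 : ℝ) • (PB x - b) + b ∈ B := by
      have := S.smul_vsub_vadd_mem (2 : ℝ) (p₁ := PB x) (p₂ := b) (p₃ := b)
        (by rw [← hS] at hp; exact hp) (by rw [← hS] at hb; exact hb)
        (by rw [← hS] at hb; exact hb)
      rw [← hS]
      simpa using this
    have h1 := hle b hb
    have h2 := hle _ hr
    have : ⟪x - PB x, (2 : ℝ) • (PB x - b) + b - PB x⟫
        = - ⟪x - PB x, b - PB x⟫ := by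
      rw [show (2 : ℝ) • (PB x - b) + b - PB x = -(b - PB x) by module,
        inner_neg_right]
    rw [this] at h2
    linarith
  -- Pythagoras
  have pyth : ∀ x : H, ∀ b ∈ B, ‖x - b‖ ^ 2 = ‖x - PB x‖ ^ 2 + ‖PB x - b‖ ^ 2 := by
    intro x b hb
    have h0 := key x b hb
    have hsplit : x - b = (x - PB x) + (PB x - b) := by abel
    have h1 : ⟪x - PB x, PB x - b⟫ = 0 := by
      rw [show PB x - b = -(b - PB x) by abel, inner_neg_right, h0, neg_zero]
    rw [hsplit, norm_add_sq_real, h1]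
    ring
  have main : ∀ x : H, PA (PB x) ∈ A ∩ B ∧ ∀ z ∈ A ∩ B, ‖x - PA (PB x)‖ ≤ ‖x - z‖ := by
    intro x
    have hpB : PB x ∈ B := (hPB x).1
    have hmem : PA (PB x) ∈ A ∩ B := ⟨(hPA (PB x)).1, hmaps _ hpB⟩
    refine ⟨hmem, fun z hz => ?_⟩
    have h1 : ‖x - PA (PB x)‖ ^ 2 = ‖x - PB x‖ ^ 2 + ‖PB x - PA (PB x)‖ ^ 2 :=
      pyth x _ hmem.2
    have h2 : ‖x - z‖ ^ 2 = ‖x - PB x‖ ^ 2 + ‖PB x - z‖ ^ 2 := pyth x z hz.2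
    have h3 : ‖PB x - PA (PB x)‖ ≤ ‖PB x - z‖ := (hPA (PB x)).2 z hz.1
    nlinarith [norm_nonneg (x - PA (PB x)), norm_nonneg (x - z),
      norm_nonneg (PB x - PA (PB x)), norm_nonneg (PB x - z)]
  exact ⟨⟨PA (PB hBne.choose), (main hBne.choose).1⟩, main⟩
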